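/- For every D > 0 and every λ ∈ [0,1), the consistency of the schedule X(λ) against the distribution μ_D with density 2D/x² on [D, 2D] equals exactly 4 ln 2, i.e., E_{z∼μ_D}[z] / E_{z∼μ_D}[ℓ(X(λ),z)] = 4 ln 2. -/

import Mathlib

/-- `ell lam T` is the length of the largest contract of the schedule
`X(λ) = (2^{i-λ})_{i∈ℤ}` completed by time `T`; contract `i` completes at time
`2^{i+1-λ}`. -/
noncomputable def ell (lam T : ℝ) : ℝ :=
  (2 : ℝ) ^ (((⌊Real.logb 2 T - 1 + lam⌋ : ℤ) : ℝ) - lam)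

/-- For every `D > 0` and every `λ ∈ [0,1)`, the consistency of `X(λ)` against
the distribution with density `2D/x²` on `[D,2D]` equals exactly `4 ln 2`:
`E[z] / E[ℓ(X(λ),z)] = 4 ln 2`. -/
theorem stmt_10 (D : ℝ) (hD : 0 < D) (lam : ℝ) (hlam : lam ∈ Set.Ico (0 : ℝ) 1) :
    (∫ x in D..(2 * D), x * (2 * D / x ^ 2))
        / (∫ x in D..(2 * D), ell lam x * (2 * D / x ^ 2))
      = 4 * Real.log 2 := by
  obtain ⟨hlam0, hlam1⟩ := hlam
  have h2 : (0:ℝ) < 2 := by norm_num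
  have h2ne : (2:ℝ) ≠ 1 := by norm_num
  set a : ℝ := Real.logb 2 D - 1 + lam with ha
  set m : ℤ := ⌊a⌋ with hm
  set c : ℝ := (2:ℝ) ^ ((m:ℝ) + 2 - lam) with hc
  have hma : (m:ℝ) ≤ a := Int.floor_le a
  have ham : a < (m:ℝ) + 1 := Int.lt_floor_add_one a
  have hlogD : Real.logb 2 D = a + 1 - lam := by rw [ha]; ring
  have hD2 : D = (2:ℝ) ^ (a + 1 - lam) := by
    rw [← hlogD, Real.rpow_logb h2 h2ne hD]
  have hlog2D : Real.logb 2 (2 * D) = a + 2 - lam := by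
    have h22 : Real.logb 2 2 = 1 := by simp
    rw [Real.logb_mul (by norm_num) hD.ne', h22, hlogD]; ring
  have hcpos : 0 < c := Real.rpow_pos_of_pos h2 _
  have hDc : D < c := by
    rw [hD2, hc]
    exact Real.rpow_lt_rpow_left_iff (by norm_num) |>.mpr (by linarith)
  have hc2D : c ≤ 2 * D := by
    have : 2 * D = (2:ℝ) ^ (a + 2 - lam) := by
      have := Real.rpow_logb h2 h2ne (by linarith : (0:ℝ) < 2 * D)
      rw [hlog2D] at this; exact this.symm
    rw [this, hc]
    exact Real.rpow_le_rpow_left_iff (by norm_num) |>.mpr (by linarith)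
  have hlogc : Real.logb 2 c = (m:ℝ) + 2 - lam := Real.logb_rpow h2 h2ne
  -- floor values on the two pieces
  have hfloor1 : ∀ x ∈ Set.Ioc D c, x ≠ c → ell lam x = (2:ℝ) ^ ((m:ℝ) - lam) := by
    intro x hx hxc
    have hxpos : 0 < x := hD.trans hx.1
    have hxc' : x < c := lt_of_le_of_ne hx.2 hxc
    have h1 : Real.logb 2 D ≤ Real.logb 2 x := Real.logb_le_logb_of_le (by norm_num) hD hx.1.le
    have h2' : Real.logb 2 x < Real.logb 2 c := Real.logb_lt_logb (by norm_num) hxpos hxc'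
    have hfl : ⌊Real.logb 2 x - 1 + lam⌋ = m := by
      apply Int.floor_eq_iff.mpr
      constructor
      · rw [hlogD] at h1; linarith
      · rw [hlogc] at h2'; linarith
    rw [ell, hfl]
  have hfloor2 : ∀ x ∈ Set.Icc c (2 * D), ell lam x = (2:ℝ) ^ ((m:ℝ) + 1 - lam) := by
    intro x hx
    have hxpos : 0 < x := hcpos.trans_le hx.1
    have h1 : Real.logb 2 c ≤ Real.logb 2 x := Real.logb_le_logb_of_le (by norm_num) hcpos hx.1
    have h2' : Real.logb 2 x ≤ Real.logb 2 (2 * D) :=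
      Real.logb_le_logb_of_le (by norm_num) hxpos hx.2
    have hfl : ⌊Real.logb 2 x - 1 + lam⌋ = m + 1 := by
      apply Int.floor_eq_iff.mpr
      constructor
      · rw [hlogc] at h1; push_cast; linarith
      · rw [hlog2D] at h2'; push_cast; linarith
    rw [ell, hfl]; push_cast; ring_nf
  -- numerator
  have hnum : (∫ x in D..(2 * D), x * (2 * D / x ^ 2)) = 2 * D * Real.log 2 := by
    rw [show (∫ x in D..(2 * D), x * (2 * D / x ^ 2)) = ∫ x in D..(2 * D), (2 * D) * x⁻¹ from ?_,
      intervalIntegral.integral_const_mul, integral_inv_of_pos hD (by linarith)]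
    · rw [mul_div_assoc, div_self hD.ne']; norm_num
    · apply intervalIntegral.integral_congr
      intro x hx
      rw [Set.uIcc_of_le (by linarith : D ≤ 2 * D)] at hx
      have hxpos : 0 < x := lt_of_lt_of_le hD hx.1
      field_simp
  -- integrals of x⁻²
  have hinv2 : ∀ p q : ℝ, 0 < p → p ≤ q →
      (∫ x in p..q, (x ^ 2)⁻¹) = p⁻¹ - q⁻¹ := by
    intro p q hp hpq
    have h0 : (0:ℝ) ∉ Set.uIcc p q := by
      rw [Set.uIcc_of_le hpq]
      intro h
      exact absurd h.1 (by linarith)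
    have := integral_zpow (a := p) (b := q) (n := -2) (Or.inr ⟨by norm_num, h0⟩)
    rw [show (fun x:ℝ => (x ^ 2)⁻¹) = fun x:ℝ => x ^ (-2:ℤ) from funext fun x => by
      rw [zpow_neg]; norm_cast]
    rw [this]
    norm_num
    ring
  set K1 : ℝ := (2:ℝ) ^ ((m:ℝ) - lam) with hK1
  have hK1pos : 0 < K1 := Real.rpow_pos_of_pos h2 _
  -- a.e. equality on the first piece
  have hae1 : ∀ᵐ x : ℝ, x ∈ Set.uIoc D c →
      ell lam x * (2 * D / x ^ 2) = (K1 * (2 * D)) * (x ^ 2)⁻¹ := by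
    have hne : ∀ᵐ x : ℝ, x ∉ ({c} : Set ℝ) :=
      MeasureTheory.measure_eq_zero_iff_ae_notMem.mp (MeasureTheory.measure_singleton c)
    filter_upwards [hne] with x hx hxI
    rw [Set.uIoc_of_le hDc.le] at hxI
    simp only [Set.mem_singleton_iff] at hx
    rw [hfloor1 x hxI hx, div_eq_mul_inv]
    ring
  have heq2 : ∀ x ∈ Set.uIoc c (2 * D),
      ell lam x * (2 * D / x ^ 2) = ((2 * K1) * (2 * D)) * (x ^ 2)⁻¹ := by
    intro x hxI
    rw [Set.uIoc_of_le hc2D] at hxI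
    rw [hfloor2 x (Set.Ioc_subset_Icc_self hxI), show (m:ℝ) + 1 - lam = 1 + ((m:ℝ) - lam) by ring,
      Real.rpow_add h2, Real.rpow_one, div_eq_mul_inv, ← hK1]
    ring
  -- integrability
  have hcont : ∀ (K p q : ℝ), 0 < p → p ≤ q →
      IntervalIntegrable (fun x : ℝ => K * (x ^ 2)⁻¹) MeasureTheory.volume p q := by
    intro K p q hp hpq
    apply ContinuousOn.intervalIntegrable
    apply ContinuousOn.mul continuousOn_const
    apply ContinuousOn.inv₀ (by fun_prop)
    intro x hx
    rw [Set.uIcc_of_le hpq] at hx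
    have hxp : 0 < x := lt_of_lt_of_le hp hx.1
    positivity
  have hI1 : IntervalIntegrable (fun x => ell lam x * (2 * D / x ^ 2))
      MeasureTheory.volume D c := by
    apply (hcont (K1 * (2 * D)) D c hD hDc.le).congr_ae
    exact ((MeasureTheory.ae_restrict_iff' measurableSet_uIoc).mpr
      (hae1.mono fun x hx hxI => (hx hxI).symm))
  have hI2 : IntervalIntegrable (fun x => ell lam x * (2 * D / x ^ 2))
      MeasureTheory.volume c (2 * D) := by
    apply (hcont ((2 * K1) * (2 * D)) c (2 * D) hcpos hc2D).congr_ae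
    exact ((MeasureTheory.ae_restrict_iff' measurableSet_uIoc).mpr
      (MeasureTheory.ae_of_all _ fun x hxI => (heq2 x hxI).symm))
  -- value of each piece
  have hint1 : (∫ x in D..c, ell lam x * (2 * D / x ^ 2))
      = (K1 * (2 * D)) * (D⁻¹ - c⁻¹) := by
    rw [intervalIntegral.integral_congr_ae hae1, intervalIntegral.integral_const_mul,
      hinv2 D c hD hDc.le]
  have hint2 : (∫ x in c..(2 * D), ell lam x * (2 * D / x ^ 2))
      = ((2 * K1) * (2 * D)) * (c⁻¹ - (2 * D)⁻¹) := by
    rw [intervalIntegral.integral_congr_ae (MeasureTheory.ae_of_all _ heq2),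
      intervalIntegral.integral_const_mul, hinv2 c (2 * D) hcpos hc2D]
  -- K1 / c = 1/4
  have hK1c : c⁻¹ = 1 / (4 * K1) := by
    have h4 : K1 * c⁻¹ = 1 / 4 := by
      rw [hK1, hc, ← Real.rpow_neg h2.le, ← Real.rpow_add h2,
        show (m:ℝ) - lam + -((m:ℝ) + 2 - lam) = -2 by ring,
        show ((-2 : ℝ)) = ((-2 : ℤ) : ℝ) by norm_num, Real.rpow_intCast]
      norm_num
    field_simp at h4 ⊢
    linarith
  have hden : (∫ x in D..(2 * D), ell lam x * (2 * D / x ^ 2)) = D / 2 := by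
    rw [← intervalIntegral.integral_add_adjacent_intervals hI1 hI2, hint1, hint2, hK1c]
    field_simp
    ring
  rw [hnum, hden]
  field_simp
  ring
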